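/- Let P ⊆ R^d (d ≥ 2) be a spanning pointed closed convex cone and pick a ∉ P ∪ (-P). For t > 0 set A_t = P ∪ (ta + P). Then each A_t is a P-module whose isotropy group G_{A_t} is trivial, and for s ≠ t the module A_s is not a translate of A_t. In particular {A_t : t > 0} is an uncountable family of pairwise non-translate P-modules with trivial isotropy. -/
import Mathlib


theorem stmt19 {d : ℕ} (hd : 2 ≤ d) (P : Set (EuclideanSpace ℝ (Fin d)))
    (hclosed : IsClosed P) (hconv : Convex ℝ P)
    (hcone : ∀ c : ℝ, 0 ≤ c → ∀ x ∈ P, c • x ∈ P)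
    (hspan : ∀ v : EuclideanSpace ℝ (Fin d), ∃ x ∈ P, ∃ y ∈ P, v = x - y)
    (hpointed : P ∩ (-P) = {0})
    (a : EuclideanSpace ℝ (Fin d)) (ha : a ∉ P) (ha' : -a ∉ P)
    (A : ℝ → Set (EuclideanSpace ℝ (Fin d)))
    (hA : ∀ t : ℝ, A t = P ∪ ((fun x => t • a + x) '' P)) :
    (∀ t : ℝ, 0 < t →
      (A t).Nonempty ∧ A t ≠ Set.univ ∧ IsClosed (A t) ∧
      (∀ p ∈ P, ∀ x ∈ A t, p + x ∈ A t) ∧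
      (∀ z : EuclideanSpace ℝ (Fin d),
        (fun w => w + z) '' (A t) = A t → z = 0)) ∧
    (∀ s t : ℝ, 0 < s → 0 < t → s ≠ t →
      ¬ ∃ z : EuclideanSpace ℝ (Fin d), A s = (fun w => w + z) '' (A t)) := by
  -- basic facts about P
  have hP0 : (0 : EuclideanSpace ℝ (Fin d)) ∈ P := by
    obtain ⟨x, hx, -⟩ := hspan 0
    simpa using hcone 0 le_rfl x hx
  have hadd : ∀ p ∈ P, ∀ q ∈ P, p + q ∈ P := by
    intro p hp q hq
    have h := hconv hp hq (by norm_num : (0:ℝ) ≤ 1/2) (by norm_num : (0:ℝ) ≤ 1/2)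
      (by norm_num : (1:ℝ)/2 + 1/2 = 1)
    have h2 := hcone 2 (by norm_num) _ h
    have : (2:ℝ) • ((1/2 : ℝ) • p + (1/2 : ℝ) • q) = p + q := by module
    rwa [this] at h2
  have hpos : ∀ u : ℝ, 0 < u → u • a ∉ P := by
    intro u hu h
    apply ha
    have h2 := hcone u⁻¹ (by positivity) _ h
    rwa [smul_smul, inv_mul_cancel₀ hu.ne', one_smul] at h2
  have hneg : ∀ u : ℝ, 0 < u → -(u • a) ∉ P := by
    intro u hu h
    apply ha'
    have h2 := hcone u⁻¹ (by positivity) _ h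
    rwa [smul_neg, smul_smul, inv_mul_cancel₀ hu.ne', one_smul] at h2
  have h0A : ∀ t : ℝ, (0 : EuclideanSpace ℝ (Fin d)) ∈ A t := by
    intro t; rw [hA]; exact Or.inl hP0
  constructor
  · intro t ht
    refine ⟨⟨0, h0A t⟩, ?_, ?_, ?_, ?_⟩
    · -- A t ≠ univ : -(t•a) ∉ A t
      intro h
      have hm : -(t • a) ∈ A t := h ▸ Set.mem_univ _
      rw [hA] at hm
      rcases hm with h1 | ⟨q, hq, hq2⟩
      · exact hneg t ht h1
      · replace hq2 : t • a + q = -(t • a) := hq2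
        have h3 : q = -((2 * t) • a) := by
          have h4 : q = -(t • a) - t • a := by rw [← hq2]; abel
          rw [h4]; module
        rw [h3] at hq
        exact hneg (2 * t) (by positivity) hq
    · -- closedness
      rw [hA]
      refine hclosed.union ?_
      have := (Homeomorph.addLeft (t • a)).isClosedMap P hclosed
      simpa [Homeomorph.coe_addLeft] using this
    · -- P-module
      intro p hp x hx
      rw [hA] at hx ⊢
      rcases hx with h1 | ⟨q, hq, hq2⟩
      · exact Or.inl (hadd p hp x h1)
      · replace hq2 : t • a + q = x := hq2
        refine Or.inr ⟨p + q, hadd p hp q hq, ?_⟩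
        show t • a + (p + q) = p + x
        rw [← hq2]; abel
    · -- trivial isotropy
      intro z hz
      have hz1 : z ∈ A t := by
        rw [← hz]; exact ⟨0, h0A t, by simp⟩
      have hz2 : -z ∈ A t := by
        have h0 := h0A t
        rw [← hz] at h0
        obtain ⟨w, hw, hw2⟩ := h0
        replace hw2 : w + z = 0 := hw2
        have : w = -z := by rw [← neg_eq_of_add_eq_zero_left hw2]
        rwa [this] at hw
      rw [hA] at hz1 hz2
      rcases hz1 with h1 | ⟨p, hp, hp2⟩ <;> rcases hz2 with h2 | ⟨q, hq, hq2⟩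
      · have : z ∈ P ∩ (-P) := ⟨h1, by simpa using h2⟩
        rw [hpointed] at this
        simpa using this
      · -- z ∈ P, -z = t•a + q
        exfalso
        replace hq2 : t • a + q = -z := hq2
        have h3 : -(t • a) = z + q := by
          have h4 : q = -z - t • a := by rw [← hq2]; abel
          rw [h4]; abel
        exact hneg t ht (h3 ▸ hadd z h1 q hq)
      · -- z = t•a + p, -z ∈ P
        exfalso
        replace hp2 : t • a + p = z := hp2
        have h3 : -(t • a) = p + -z := by rw [← hp2]; abel
        exact hneg t ht (h3 ▸ hadd p hp (-z) h2)
      · -- z = t•a+p, -z = t•a+q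
        exfalso
        replace hp2 : t • a + p = z := hp2
        replace hq2 : t • a + q = -z := hq2
        have h4 : q = -(t • a + p) - t • a := by
          rw [← hp2] at hq2
          rw [← hq2]; abel
        have h3 : -((2 * t) • a) = p + q := by rw [h4]; module
        exact hneg (2 * t) (by positivity) (h3 ▸ hadd p hp q hq)
  · intro s t hs ht hst ⟨z, hz⟩
    have hz1 : z ∈ A s := by
      rw [hz]; exact ⟨0, h0A t, by simp⟩
    have hz2 : -z ∈ A t := by
      have h0 := h0A s
      rw [hz] at h0
      obtain ⟨w, hw, hw2⟩ := h0
      replace hw2 : w + z = 0 := hw2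
      have : w = -z := by rw [← neg_eq_of_add_eq_zero_left hw2]
      rwa [this] at hw
    rw [hA] at hz1 hz2
    rcases hz1 with h1 | ⟨p, hp, hp2⟩ <;> rcases hz2 with h2 | ⟨q, hq, hq2⟩
    · -- z ∈ P, -z ∈ P ⇒ z = 0 ⇒ A s = A t, contradiction via s•a
      have hz0 : z = 0 := by
        have : z ∈ P ∩ (-P) := ⟨h1, by simpa using h2⟩
        rw [hpointed] at this
        simpa using this
      subst hz0
      have hAst : A s = A t := by simpa using hz
      have hsa : s • a ∈ A s := by
        rw [hA]; exact Or.inr ⟨0, hP0, by simp⟩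
      rw [hAst, hA] at hsa
      rcases hsa with h3 | ⟨p, hp, hp2⟩
      · exact hpos s hs h3
      · replace hp2 : t • a + p = s • a := hp2
        have hp3 : p = (s - t) • a := by
          rw [sub_smul]; exact eq_sub_of_add_eq' hp2
        rcases lt_or_gt_of_ne hst with hlt | hgt
        · have h4 : -((t - s) • a) = p := by rw [hp3]; module
          exact hneg (t - s) (by linarith) (h4 ▸ hp)
        · rw [hp3] at hp
          exact hpos (s - t) (by linarith) hp
    · -- z ∈ P, -z = t•a + q
      replace hq2 : t • a + q = -z := hq2
      have h3 : -(t • a) = z + q := by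
        have h4 : q = -z - t • a := by rw [← hq2]; abel
        rw [h4]; abel
      exact hneg t ht (h3 ▸ hadd z h1 q hq)
    · -- z = s•a + p, -z ∈ P
      replace hp2 : s • a + p = z := hp2
      have h3 : -(s • a) = p + -z := by rw [← hp2]; abel
      exact hneg s hs (h3 ▸ hadd p hp (-z) h2)
    · -- z = s•a+p, -z = t•a+q
      replace hp2 : s • a + p = z := hp2
      replace hq2 : t • a + q = -z := hq2
      have h4 : q = -(s • a + p) - t • a := by
        rw [← hp2] at hq2
        rw [← hq2]; abel
      have h3 : -((s + t) • a) = p + q := by rw [h4]; module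
      exact hneg (s + t) (by positivity) (h3 ▸ hadd p hp q hq)
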